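/- Along trajectories of the system ṗ = (1/(n−1))(p² + n pq), q̇ = (1/(n−1))(q² + n pq) with p > 0 > q, the radius satisfies r(θ) = c |cos θ sin θ|^{1/(n−1)} |cos θ − sin θ|^{−(n+1)/(n−1)} for some constant c > 0; that is, the quantity r · |cos θ sin θ|^{−1/(n−1)} · |cos θ − sin θ|^{(n+1)/(n−1)} is a first integral of the system on the region p > 0 > q. -/
import Mathlib


open Real Filter Topology MeasureTheory Set intervalIntegral

/-- On the region p > 0 > q, the quantity
r · |cos θ sin θ|^{−1/(n−1)} · |cos θ − sin θ|^{(n+1)/(n−1)}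
is a first integral of ṗ = (1/(n−1))(p² + n p q), q̇ = (1/(n−1))(q² + n p q);
equivalently r(θ) = c |cos θ sin θ|^{1/(n−1)} |cos θ − sin θ|^{−(n+1)/(n−1)}. -/
theorem polar_first_integral
    (n : ℕ) (hn : 2 ≤ n)
    (I : Set ℝ) (hI : I.OrdConnected)
    (p q r θ : ℝ → ℝ)
    (hsign : ∀ t ∈ I, p t > 0 ∧ q t < 0)
    (hr : ∀ t, r t = Real.sqrt ((p t) ^ 2 + (q t) ^ 2))
    (hθ : ∀ t ∈ I, θ t ∈ Ioo (-(Real.pi / 2)) (0:ℝ))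
    (hpr : ∀ t ∈ I, p t = r t * Real.cos (θ t))
    (hqr : ∀ t ∈ I, q t = r t * Real.sin (θ t))
    (hθd : ∀ t ∈ I, DifferentiableAt ℝ θ t)
    (hp : ∀ t ∈ I, HasDerivAt p ((1 / ((n:ℝ) - 1)) * ((p t) ^ 2 + (n:ℝ) * p t * q t)) t)
    (hq : ∀ t ∈ I, HasDerivAt q ((1 / ((n:ℝ) - 1)) * ((q t) ^ 2 + (n:ℝ) * p t * q t)) t) :
    ∀ t₁ ∈ I, ∀ t₂ ∈ I,
      r t₁ * |Real.cos (θ t₁) * Real.sin (θ t₁)| ^ ((-(1 / ((n:ℝ) - 1))) : ℝ)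
          * |Real.cos (θ t₁) - Real.sin (θ t₁)| ^ (((((n:ℝ) + 1) / ((n:ℝ) - 1))) : ℝ)
        = r t₂ * |Real.cos (θ t₂) * Real.sin (θ t₂)| ^ ((-(1 / ((n:ℝ) - 1))) : ℝ)
          * |Real.cos (θ t₂) - Real.sin (θ t₂)| ^ (((((n:ℝ) + 1) / ((n:ℝ) - 1))) : ℝ) := by
  have hn1 : (n:ℝ) - 1 ≠ 0 := by
    have : (2:ℝ) ≤ (n:ℝ) := by exact_mod_cast hn
    linarith
  set a : ℝ := 1 / ((n:ℝ) - 1) with ha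
  set b : ℝ := ((n:ℝ) + 1) / ((n:ℝ) - 1) with hb
  set G : ℝ → ℝ := fun t =>
    -a * Real.log (p t) - a * Real.log (-q t) + b * Real.log (p t - q t) with hGdef
  -- derivative of G vanishes on I
  have hGd : ∀ t ∈ I, HasDerivAt G 0 t := by
    intro t ht
    obtain ⟨hpt, hqt⟩ := hsign t ht
    have hp' := hp t ht
    have hq' := hq t ht
    have hpq : 0 < p t - q t := by linarith
    have h1 : HasDerivAt (fun s => Real.log (p s))
        ((a * ((p t) ^ 2 + (n:ℝ) * p t * q t)) / p t) t := hp'.log hpt.ne'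
    have h2 : HasDerivAt (fun s => Real.log (-q s))
        ((-(a * ((q t) ^ 2 + (n:ℝ) * p t * q t))) / (-q t)) t :=
      (hq'.neg).log (by simpa using hqt.ne)
    have h3 : HasDerivAt (fun s => Real.log (p s - q s))
        (((a * ((p t) ^ 2 + (n:ℝ) * p t * q t)) -
          (a * ((q t) ^ 2 + (n:ℝ) * p t * q t))) / (p t - q t)) t :=
      (hp'.sub hq').log hpq.ne'
    have H := ((h1.const_mul (-a)).sub (h2.const_mul a)).add (h3.const_mul b)
    have hval : (-a * ((a * ((p t) ^ 2 + (n:ℝ) * p t * q t)) / p t)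
        - a * ((-(a * ((q t) ^ 2 + (n:ℝ) * p t * q t))) / (-q t))
        + b * (((a * ((p t) ^ 2 + (n:ℝ) * p t * q t)) -
          (a * ((q t) ^ 2 + (n:ℝ) * p t * q t))) / (p t - q t))) = 0 := by
      have hq0 : q t ≠ 0 := hqt.ne
      rw [ha, hb]
      field_simp [hpt.ne', hq0, hpq.ne', hn1]
      ring
    rw [hval] at H
    exact H
  -- G is constant on I
  have hconst : ∀ s₁ ∈ I, ∀ s₂ ∈ I, s₁ ≤ s₂ → G s₂ = G s₁ := by
    intro s₁ h₁ s₂ h₂ hle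
    have hsub : Icc s₁ s₂ ⊆ I := hI.out h₁ h₂
    have hcont : ContinuousOn G (Icc s₁ s₂) := fun x hx =>
      ((hGd x (hsub hx)).continuousAt).continuousWithinAt
    have hderiv : ∀ x ∈ Ico s₁ s₂, HasDerivWithinAt G 0 (Ici x) x := fun x hx =>
      (hGd x (hsub (Ico_subset_Icc_self hx))).hasDerivWithinAt
    exact constant_of_has_deriv_right_zero hcont hderiv s₂ (right_mem_Icc.mpr hle)
  -- the claimed quantity equals exp (G t) on I
  have hF : ∀ t ∈ I,
      r t * |Real.cos (θ t) * Real.sin (θ t)| ^ (-a)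
        * |Real.cos (θ t) - Real.sin (θ t)| ^ b = Real.exp (G t) := by
    intro t ht
    obtain ⟨hpt, hqt⟩ := hsign t ht
    have hpq : 0 < p t - q t := by linarith
    have hrt : 0 < r t := by
      rw [hr]
      exact Real.sqrt_pos.mpr (add_pos_of_pos_of_nonneg (pow_pos hpt 2) (sq_nonneg _))
    have hc : Real.cos (θ t) = p t / r t := by
      rw [hpr t ht]; field_simp
    have hs : Real.sin (θ t) = q t / r t := by
      rw [hqr t ht]; field_simp
    have habs1 : |Real.cos (θ t) * Real.sin (θ t)| = (p t * (-q t)) / (r t) ^ 2 := by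
      rw [hc, hs, show p t / r t * (q t / r t) = p t * q t / r t ^ 2 by ring,
        abs_of_neg (div_neg_of_neg_of_pos (mul_neg_of_pos_of_neg hpt hqt) (pow_pos hrt 2))]
      ring
    have habs2 : |Real.cos (θ t) - Real.sin (θ t)| = (p t - q t) / r t := by
      rw [hc, hs, div_sub_div_same, abs_div, abs_of_pos hpq, abs_of_pos hrt]
    have hpos1 : (0:ℝ) < (p t * (-q t)) / (r t) ^ 2 := div_pos (mul_pos hpt (neg_pos.mpr hqt)) (pow_pos hrt 2)
    have hpos2 : (0:ℝ) < (p t - q t) / r t := div_pos hpq hrt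
    rw [habs1, habs2, Real.rpow_def_of_pos hpos1, Real.rpow_def_of_pos hpos2]
    have hlog1 : Real.log ((p t * (-q t)) / (r t) ^ 2)
        = Real.log (p t) + Real.log (-q t) - 2 * Real.log (r t) := by
      rw [Real.log_div (mul_pos hpt (neg_pos.mpr hqt)).ne' (pow_pos hrt 2).ne',
        Real.log_mul hpt.ne' (by simpa using hqt.ne), Real.log_pow]
      push_cast; ring
    have hlog2 : Real.log ((p t - q t) / r t)
        = Real.log (p t - q t) - Real.log (r t) := by
      rw [Real.log_div hpq.ne' hrt.ne']
    rw [hlog1, hlog2]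
    nth_rewrite 1 [← Real.exp_log hrt]
    rw [← Real.exp_add, ← Real.exp_add]
    congr 1
    rw [hGdef]
    simp only
    rw [ha, hb]
    field_simp
    ring
  intro t₁ ht₁ t₂ ht₂
  have hGG : G t₁ = G t₂ := by
    rcases le_total t₁ t₂ with h | h
    · exact (hconst t₁ ht₁ t₂ ht₂ h).symm
    · exact hconst t₂ ht₂ t₁ ht₁ h
  rw [show (-(1 / ((n:ℝ) - 1))) = -a from rfl,
    show ((((n:ℝ) + 1) / ((n:ℝ) - 1))) = b from rfl] at *
  rw [hF t₁ ht₁, hF t₂ ht₂, hGG]
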